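/- Let X ⊆ ℝⁿ be compact with ∇(X) = 0 < Δ(X), let c ∈ (0,1), and for each k ∈ ℕ set ε_k := c^k, N_k := |𝒬(ε_k,X)| (the number of cubes of the ε_k-tiling meeting X), and F_k := ε_k·ℤⁿ ∩ ⋃{Q : Q ∈ 𝒬(ε_k,X)}. Suppose the limit L := lim_{k→∞} ln N_k / (−ln ε_k) exists (L is the box-counting dimension of X). Then for all sufficiently large k the set F_k has no focal points, and lim_{k→∞} dim_fB(F_k) = L. -/

import Mathlib

open Metric

namespace FinDim

variable {X : Type*} [MetricSpace X]

/-- `ν_F(a)`: the distance from `a` to a nearest other point of `F`. -/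
noncomputable def nu (F : Finset X) (a : X) : ℝ :=
  sInf {r : ℝ | ∃ x ∈ F, x ≠ a ∧ r = dist a x}

/-- `δ(F)`: the separation of `F`, the minimum distance between distinct points. -/
noncomputable def sep (F : Finset X) : ℝ :=
  sInf {r : ℝ | ∃ x ∈ F, ∃ y ∈ F, x ≠ y ∧ r = dist x y}

/-- A 2-covering of `F`: a family of subsets of `F` covering `F`,
each member having at least two elements. -/
def IsTwoCover (F : Finset X) (U : Finset (Finset X)) : Prop :=
  (∀ V ∈ U, V ⊆ F) ∧ (∀ V ∈ U, 2 ≤ V.card) ∧ ∀ a ∈ F, ∃ V ∈ U, a ∈ V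

/-- `Δ(𝒰)`: maximum diameter of the members of the family `𝒰`. -/
noncomputable def coverDiam (U : Finset (Finset X)) : ℝ :=
  sSup {r : ℝ | ∃ V ∈ U, r = Metric.diam (V : Set X)}

/-- `∇(F)`: the covering diameter of `F`. -/
noncomputable def nablaF (F : Finset X) : ℝ :=
  sInf {r : ℝ | ∃ U : Finset (Finset X), IsTwoCover F U ∧ r = coverDiam U}

/-- `a` is a focal point of `F`. -/
def IsFocal (F : Finset X) (a : X) : Prop :=
  a ∈ F ∧ ∀ x ∈ F, x ≠ a → dist a x = Metric.diam (F : Set X)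

/-- `H^s_𝒰(F) = Σ_{U ∈ 𝒰} Δ(U)^s`. -/
noncomputable def Hcov (U : Finset (Finset X)) (s : ℝ) : ℝ :=
  ∑ V ∈ U, Metric.diam (V : Set X) ^ s

/-- `H^s(F)`: minimum of `H^s_𝒰(F)` over 2-coverings `𝒰` with `Δ(𝒰) = ∇(F)`. -/
noncomputable def HH (F : Finset X) (s : ℝ) : ℝ :=
  sInf {h : ℝ | ∃ U : Finset (Finset X),
    IsTwoCover F U ∧ coverDiam U = nablaF F ∧ h = Hcov U s}

/-- The finite Hausdorff dimension: the unique `s₀ ∈ (0,∞)` with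
`H^{s₀}(F) = Δ(F)^{s₀}` (when `F` has no focal points). -/
noncomputable def dimfH (F : Finset X) : ℝ :=
  sInf {s : ℝ | 0 < s ∧ HH F s = Metric.diam (F : Set X) ^ s}

/-- `T_{∇(F)}(F)`: the minimal cardinality of a 2-covering `𝒰` with `Δ(𝒰) = ∇(F)`. -/
noncomputable def Tmin (F : Finset X) : ℕ :=
  sInf {n : ℕ | ∃ U : Finset (Finset X),
    IsTwoCover F U ∧ coverDiam U = nablaF F ∧ U.card = n}

/-- The finite box dimension `dim_fB(F) = ln T_{∇(F)}(F) / ln (Δ(F)/∇(F))`. -/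
noncomputable def dimfB (F : Finset X) : ℝ :=
  Real.log (Tmin F) / Real.log (Metric.diam (F : Set X) / nablaF F)

/-- `ν_A(x)` for a subset `A` of a metric space. -/
noncomputable def nuSet {Z : Type*} [MetricSpace Z] (A : Set Z) (x : Z) : ℝ :=
  sInf {r : ℝ | ∃ y ∈ A, y ≠ x ∧ r = dist x y}

/-- `∇(A) = sup {ν_A(x) : x ∈ A}` for a subset `A` of a metric space. -/
noncomputable def nablaSet {Z : Type*} [MetricSpace Z] (A : Set Z) : ℝ :=
  sSup {r : ℝ | ∃ x ∈ A, r = nuSet A x}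

end FinDim


namespace FinDim

/-- The closed axis-parallel cube of the `ε`-tiling of `ℝⁿ` indexed by `m ∈ ℤⁿ`. -/
def cube (n : ℕ) (ε : ℝ) (m : Fin n → ℤ) : Set (EuclideanSpace ℝ (Fin n)) :=
  {x | ∀ i, ε * (m i : ℝ) ≤ x i ∧ x i ≤ ε * ((m i : ℝ) + 1)}

/-- The set of corners (lattice points) of the cube indexed by `m`. -/
def corners (n : ℕ) (ε : ℝ) (m : Fin n → ℤ) : Set (EuclideanSpace ℝ (Fin n)) :=
  {p | ∀ i, p i = ε * (m i : ℝ) ∨ p i = ε * ((m i : ℝ) + 1)}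

/-- `F_ε = ε·ℤⁿ ∩ ⋃ 𝒬(ε,X)`: all lattice corners of cubes of the `ε`-tiling
that meet `X`. -/
def latticeApprox (n : ℕ) (X : Set (EuclideanSpace ℝ (Fin n))) (ε : ℝ) :
    Set (EuclideanSpace ℝ (Fin n)) :=
  {p | ∃ m : Fin n → ℤ, (cube n ε m ∩ X).Nonempty ∧ p ∈ corners n ε m}

end FinDim

namespace FinDimAux
open FinDim


lemma coord_le_dist {n : ℕ} (x y : EuclideanSpace ℝ (Fin n)) (i : Fin n) :
    |x i - y i| ≤ dist x y := by
  rw [EuclideanSpace.dist_eq, ← Real.sqrt_sq_eq_abs]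
  apply Real.sqrt_le_sqrt
  have h : (x i - y i) ^ 2 = dist (x i) (y i) ^ 2 := by rw [Real.dist_eq, sq_abs]
  rw [h]
  exact Finset.single_le_sum (f := fun j => dist (x j) (y j) ^ 2)
    (fun j _ => sq_nonneg _) (Finset.mem_univ i)

/-- Every `x` lies in the cube indexed by coordinatewise floors. -/
lemma mem_floor_cube {n : ℕ} {ε : ℝ} (hε : 0 < ε) (x : EuclideanSpace ℝ (Fin n)) :
    x ∈ cube n ε (fun i => ⌊x i / ε⌋) := by
  intro i
  simp only
  have hf := Int.floor_le (x i / ε)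
  have hf2 := (Int.lt_floor_add_one (x i / ε)).le
  have hx : ε * (x i / ε) = x i := by field_simp
  constructor <;> nlinarith

/-- Each `x ∈ X` is within `ε` coordinatewise of a lattice point. -/
lemma exists_close_lattice {n : ℕ} {X : Set (EuclideanSpace ℝ (Fin n))} {ε : ℝ}
    (hε : 0 < ε) {x : EuclideanSpace ℝ (Fin n)} (hx : x ∈ X) :
    ∃ p ∈ latticeApprox n X ε, ∀ i, |x i - p i| ≤ ε := by
  set m : Fin n → ℤ := fun i => ⌊x i / ε⌋ with hm
  set p : EuclideanSpace ℝ (Fin n) := WithLp.toLp 2 (fun i => ε * (m i : ℝ)) with hp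
  have hcube := mem_floor_cube hε x
  refine ⟨p, ⟨m, ⟨x, hcube, hx⟩, fun i => Or.inl rfl⟩, fun i => ?_⟩
  obtain ⟨h1, h2⟩ := hcube i
  have hpi : p i = ε * (m i : ℝ) := rfl
  rw [abs_le, hpi]
  constructor <;> nlinarith

/-- Each lattice point is within `ε` coordinatewise of a point of `X`. -/
lemma exists_close_X {n : ℕ} {X : Set (EuclideanSpace ℝ (Fin n))} {ε : ℝ}
    {p : EuclideanSpace ℝ (Fin n)} (hp : p ∈ latticeApprox n X ε) :
    ∃ x ∈ X, ∀ i, |p i - x i| ≤ ε := by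
  obtain ⟨m, ⟨x, hxc, hxX⟩, hc⟩ := hp
  refine ⟨x, hxX, fun i => ?_⟩
  obtain ⟨h1, h2⟩ := hxc i
  rcases hc i with h3 | h3 <;> (rw [h3, abs_le]; constructor <;> nlinarith)

/-- The set of cubes meeting a bounded set is finite. -/
lemma S_finite {n : ℕ} {X : Set (EuclideanSpace ℝ (Fin n))} (hb : Bornology.IsBounded X)
    {ε : ℝ} (hε : 0 < ε) : {m : Fin n → ℤ | (cube n ε m ∩ X).Nonempty}.Finite := by
  obtain ⟨R, hR⟩ := hb.subset_closedBall 0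
  set M : ℤ := ⌈R / ε⌉ + 1 with hM
  apply Set.Finite.subset (Set.Finite.pi (fun i : Fin n => Set.finite_Icc (-M) M))
  rintro m ⟨x, hxc, hxX⟩
  intro i _
  have hxi : |x i| ≤ R := by
    have h0 : dist x 0 ≤ R := hR hxX
    have h1 := coord_le_dist x 0 i
    have h00 : (0 : EuclideanSpace ℝ (Fin n)) i = 0 := rfl
    rw [h00, sub_zero] at h1
    linarith
  obtain ⟨h1, h2⟩ := hxc i
  have habs := abs_le.mp hxi
  have hceil : R ≤ (⌈R / ε⌉ : ℝ) * ε := (div_le_iff₀ hε).mp (Int.le_ceil _)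
  simp only [Set.mem_Icc]
  constructor
  · have : (-M : ℝ) ≤ (m i : ℝ) := by push_cast [hM]; nlinarith
    exact_mod_cast this
  · have : (m i : ℝ) ≤ (M : ℝ) := by push_cast [hM]; nlinarith
    exact_mod_cast this


open FinDim

def IsLatPt {n : ℕ} (ε : ℝ) (p : EuclideanSpace ℝ (Fin n)) : Prop :=
  ∀ i, ∃ z : ℤ, p i = ε * z

lemma isLatPt_of_corners {n : ℕ} {ε : ℝ} {m : Fin n → ℤ} {p : EuclideanSpace ℝ (Fin n)}
    (h : p ∈ corners n ε m) : IsLatPt ε p := by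
  intro i
  rcases h i with h1 | h1
  · exact ⟨m i, h1⟩
  · exact ⟨m i + 1, by rw [h1]; push_cast; ring⟩

lemma isLatPt_of_mem {n : ℕ} {X : Set (EuclideanSpace ℝ (Fin n))} {ε : ℝ}
    {p : EuclideanSpace ℝ (Fin n)} (h : p ∈ latticeApprox n X ε) : IsLatPt ε p := by
  obtain ⟨m, _, hc⟩ := h
  exact isLatPt_of_corners hc

/-- Every point of the lattice approximation has a neighbour at distance exactly `ε`. -/
lemma neighbor {n : ℕ} (hn : 0 < n) {X : Set (EuclideanSpace ℝ (Fin n))} {ε : ℝ}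
    (hε : 0 < ε) {p : EuclideanSpace ℝ (Fin n)} (hp : p ∈ latticeApprox n X ε) :
    ∃ q ∈ latticeApprox n X ε, q ≠ p ∧ dist p q = ε := by
  obtain ⟨m, hm, hc⟩ := hp
  set i0 : Fin n := ⟨0, hn⟩ with hi0
  set v : ℝ := if p i0 = ε * (m i0 : ℝ) then ε * ((m i0 : ℝ) + 1) else ε * (m i0 : ℝ) with hv
  set q : EuclideanSpace ℝ (Fin n) := WithLp.toLp 2 (fun i => if i = i0 then v else p i) with hq
  have hqi : ∀ i, q i = if i = i0 then v else p i := fun i => rfl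
  have hvp : |v - p i0| = ε := by
    rcases hc i0 with h1 | h1
    · rw [hv, if_pos h1, h1]
      have : ε * ((m i0 : ℝ) + 1) - ε * (m i0 : ℝ) = ε := by ring
      rw [this, abs_of_pos hε]
    · have hne : p i0 ≠ ε * (m i0 : ℝ) := by
        rw [h1]; intro h2
        have : ε = 0 := by nlinarith
        exact hε.ne' this
      rw [hv, if_neg hne, h1]
      have : ε * (m i0 : ℝ) - ε * ((m i0 : ℝ) + 1) = -ε := by ring
      rw [this, abs_neg, abs_of_pos hε]
  have hqc : q ∈ corners n ε m := by
    intro i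
    rw [hqi i]
    by_cases h : i = i0
    · rw [if_pos h, hv]
      subst h
      split
      · exact Or.inr rfl
      · exact Or.inl rfl
    · rw [if_neg h]; exact hc i
  refine ⟨q, ⟨m, hm, hqc⟩, ?_, ?_⟩
  · intro h
    have : q i0 = p i0 := by rw [h]
    rw [hqi, if_pos rfl] at this
    rw [this] at hvp
    simp at hvp
    exact hε.ne' hvp.symm
  · rw [EuclideanSpace.dist_eq]
    have hsum : ∑ i, dist (p i) (q i) ^ 2 = ε ^ 2 := by
      rw [Finset.sum_eq_single i0]
      · rw [hqi, if_pos rfl, Real.dist_eq, abs_sub_comm, hvp]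
      · intro j _ hj
        rw [hqi, if_neg hj]
        simp
      · intro h
        exact absurd (Finset.mem_univ i0) h
    rw [hsum, Real.sqrt_sq hε.le]


open FinDim

lemma exists_superset_finset {n : ℕ} {X : Set (EuclideanSpace ℝ (Fin n))} {ε : ℝ}
    (hfin : {m : Fin n → ℤ | (cube n ε m ∩ X).Nonempty}.Finite) :
    ∃ T : Finset (EuclideanSpace ℝ (Fin n)), latticeApprox n X ε ⊆ ↑T ∧
      T.card ≤ 2 ^ n * {m : Fin n → ℤ | (cube n ε m ∩ X).Nonempty}.ncard := by
  classical
  set gF : (Fin n → ℤ) → Finset (EuclideanSpace ℝ (Fin n)) :=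
    fun m => (Fintype.piFinset fun i => ({m i, m i + 1} : Finset ℤ)).image
      (fun z => (WithLp.toLp 2 (fun i => ε * (z i : ℝ)) : EuclideanSpace ℝ (Fin n))) with hgF
  refine ⟨hfin.toFinset.biUnion gF, ?_, ?_⟩
  · rintro p ⟨m, hm, hc⟩
    simp only [Finset.coe_biUnion, Set.mem_iUnion, Finset.mem_coe]
    refine ⟨m, by simpa using hm, ?_⟩
    refine Finset.mem_image.mpr ⟨fun i => if p i = ε * (m i : ℝ) then m i else m i + 1, ?_, ?_⟩
    · simp only [Fintype.mem_piFinset, Finset.mem_insert, Finset.mem_singleton]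
      intro i; split <;> simp
    · ext i
      by_cases h : p i = ε * (m i : ℝ)
      · simp [h]
      · rcases hc i with h1 | h1
        · exact absurd h1 h
        · simp only [PiLp.toLp_apply, if_neg h]
          rw [h1]; push_cast; ring
  · calc (hfin.toFinset.biUnion gF).card ≤ ∑ m ∈ hfin.toFinset, (gF m).card :=
        Finset.card_biUnion_le
      _ ≤ ∑ _m ∈ hfin.toFinset, 2 ^ n := by
          apply Finset.sum_le_sum
          intro m _
          calc (gF m).card
              ≤ (Fintype.piFinset fun i => ({m i, m i + 1} : Finset ℤ)).card :=
                Finset.card_image_le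
            _ = ∏ i, ({m i, m i + 1} : Finset ℤ).card := Fintype.card_piFinset _
            _ ≤ ∏ _i : Fin n, 2 :=
                Finset.prod_le_prod' (fun i _ => (Finset.card_insert_le _ _).trans (by simp))
            _ = 2 ^ n := by simp
      _ = hfin.toFinset.card * 2 ^ n := by rw [Finset.sum_const, smul_eq_mul]
      _ = 2 ^ n * {m : Fin n → ℤ | (cube n ε m ∩ X).Nonempty}.ncard := by
          rw [Set.ncard_eq_toFinset_card _ hfin, mul_comm]

lemma ncard_S_le_lattice {n : ℕ} {X : Set (EuclideanSpace ℝ (Fin n))} {ε : ℝ} (hε : 0 < ε)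
    (hlatfin : (latticeApprox n X ε).Finite) :
    {m : Fin n → ℤ | (cube n ε m ∩ X).Nonempty}.ncard ≤ (latticeApprox n X ε).ncard := by
  refine Set.ncard_le_ncard_of_injOn
    (fun m => (WithLp.toLp 2 (fun i => ε * (m i : ℝ)) : EuclideanSpace ℝ (Fin n)))
    (fun m hm => ⟨m, hm, fun i => Or.inl rfl⟩) ?_ hlatfin
  intro m _ m' _ h
  funext i
  have h2 : ε * ((m i : ℝ)) = ε * ((m' i : ℝ)) := congrArg (fun v : EuclideanSpace ℝ (Fin n) => v i) h
  have := mul_left_cancel₀ hε.ne' h2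
  exact_mod_cast this


open FinDim

variable {Y : Type*} [MetricSpace Y]

lemma cover_set_eq (U : Finset (Finset Y)) :
    {r : ℝ | ∃ V ∈ U, r = Metric.diam (V : Set Y)} =
      ↑(U.image fun V : Finset Y => Metric.diam (V : Set Y)) := by
  classical
  ext r
  simp [eq_comm]

lemma diam_mem_le_coverDiam (U : Finset (Finset Y)) {V : Finset Y} (hV : V ∈ U) :
    Metric.diam (V : Set Y) ≤ coverDiam U := by
  classical
  rw [coverDiam, cover_set_eq]
  exact le_csSup (Finset.bddAbove _) (by simp; exact ⟨V, hV, rfl⟩)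

lemma le_coverDiam_of_sep {F : Finset Y} {ε : ℝ}
    (hsep : ∀ p ∈ F, ∀ q ∈ F, p ≠ q → ε ≤ dist p q) (hFne : F.Nonempty)
    {U : Finset (Finset Y)} (hU : IsTwoCover F U) : ε ≤ coverDiam U := by
  obtain ⟨p, hp⟩ := hFne
  obtain ⟨V, hVU, hpV⟩ := hU.2.2 p hp
  have h2 := hU.2.1 V hVU
  obtain ⟨a, ha, b, hb, hab⟩ := Finset.one_lt_card.mp (show 1 < V.card by omega)
  have haF := hU.1 V hVU ha
  have hbF := hU.1 V hVU hb
  have h3 : ε ≤ dist a b := hsep a haF b hbF hab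
  have h4 : dist a b ≤ Metric.diam (V : Set Y) :=
    Metric.dist_le_diam_of_mem V.finite_toSet.isBounded
      (Finset.mem_coe.mpr ha) (Finset.mem_coe.mpr hb)
  exact h3.trans (h4.trans (diam_mem_le_coverDiam U hVU))

lemma nablaF_eq_of {F : Finset Y} {ε : ℝ} (hε : 0 < ε)
    (hsep : ∀ p ∈ F, ∀ q ∈ F, p ≠ q → ε ≤ dist p q)
    (hnb : ∀ p ∈ F, ∃ q ∈ F, q ≠ p ∧ dist p q = ε)
    (hFne : F.Nonempty) :
    nablaF F = ε ∧
      ∃ U : Finset (Finset Y), IsTwoCover F U ∧ coverDiam U = ε ∧ U.card ≤ F.card := by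
  classical
  choose nb hnbF hnbne hnbd using hnb
  set U : Finset (Finset Y) := F.attach.image fun q => ({q.1, nb q.1 q.2} : Finset Y) with hUdef
  have hpair : ∀ (p : Y) (hp : p ∈ F), ({p, nb p hp} : Finset Y).card = 2 := by
    intro p hp
    rw [Finset.card_insert_of_notMem (by simp [Ne.symm (hnbne p hp)] )]
    simp
  have hUcover : IsTwoCover F U := by
    refine ⟨?_, ?_, ?_⟩
    · intro V hV
      simp only [hUdef, Finset.mem_image, Finset.mem_attach, true_and] at hV
      obtain ⟨⟨p, hp⟩, rfl⟩ := hV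
      intro a ha
      simp only [Finset.mem_insert, Finset.mem_singleton] at ha
      rcases ha with rfl | rfl
      · exact hp
      · exact hnbF p hp
    · intro V hV
      simp only [hUdef, Finset.mem_image, Finset.mem_attach, true_and] at hV
      obtain ⟨⟨p, hp⟩, rfl⟩ := hV
      rw [hpair p hp]
    · intro a ha
      refine ⟨{a, nb a ha}, ?_, by simp⟩
      simp only [hUdef, Finset.mem_image, Finset.mem_attach, true_and]
      exact ⟨⟨a, ha⟩, rfl⟩
  have hdiamV : ∀ V ∈ U, Metric.diam (V : Set Y) = ε := by
    intro V hV
    simp only [hUdef, Finset.mem_image, Finset.mem_attach, true_and] at hV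
    obtain ⟨⟨p, hp⟩, rfl⟩ := hV
    have : (({p, nb p hp} : Finset Y) : Set Y) = ({p, nb p hp} : Set Y) := by simp
    rw [this, Metric.diam_pair, hnbd p hp]
  have hUne : U.Nonempty := by
    obtain ⟨p, hp⟩ := hFne
    exact ⟨{p, nb p hp}, by
      simp only [hUdef, Finset.mem_image, Finset.mem_attach, true_and]
      exact ⟨⟨p, hp⟩, rfl⟩⟩
  have hcd : coverDiam U = ε := by
    have hseteq : {r : ℝ | ∃ V ∈ U, r = Metric.diam (V : Set Y)} = {ε} := by
      ext r
      constructor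
      · rintro ⟨V, hV, rfl⟩
        simp [hdiamV V hV]
      · rintro rfl
        obtain ⟨V, hV⟩ := hUne
        exact ⟨V, hV, (hdiamV V hV).symm⟩
    rw [coverDiam, hseteq, csSup_singleton]
  have hnabla : nablaF F = ε := by
    apply le_antisymm
    · refine csInf_le ?_ ?_
      · exact ⟨ε, by rintro r ⟨U', hU', rfl⟩; exact le_coverDiam_of_sep hsep hFne hU'⟩
      · exact ⟨U, hUcover, hcd.symm⟩
    · have hne2 : Set.Nonempty {r : ℝ | ∃ U' : Finset (Finset Y),
          IsTwoCover F U' ∧ r = coverDiam U'} := ⟨ε, U, hUcover, hcd.symm⟩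
      apply le_csInf hne2
      rintro r ⟨U', hU', rfl⟩
      exact le_coverDiam_of_sep hsep hFne hU'
  refine ⟨hnabla, U, hUcover, hcd, ?_⟩
  calc U.card ≤ F.attach.card := Finset.card_image_le
    _ = F.card := Finset.card_attach

lemma tmin_facts {F : Finset Y} {ε : ℝ} {B : ℕ} (hε : 0 < ε)
    (hsep : ∀ p ∈ F, ∀ q ∈ F, p ≠ q → ε ≤ dist p q)
    (hnb : ∀ p ∈ F, ∃ q ∈ F, q ≠ p ∧ dist p q = ε)
    (hFne : F.Nonempty)
    (hsmall : ∀ V : Finset Y, V ⊆ F → Metric.diam (V : Set Y) ≤ ε → V.card ≤ B) :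
    Tmin F ≤ F.card ∧ F.card ≤ B * Tmin F := by
  classical
  obtain ⟨hnabla, U0, hU0, hcd0, hcard0⟩ := nablaF_eq_of hε hsep hnb hFne
  have hmem0 : U0.card ∈ {t : ℕ | ∃ U : Finset (Finset Y),
      IsTwoCover F U ∧ coverDiam U = nablaF F ∧ U.card = t} :=
    ⟨U0, hU0, by rw [hcd0, hnabla], rfl⟩
  constructor
  · exact (Nat.sInf_le hmem0).trans hcard0
  · have hT : ∃ U : Finset (Finset Y),
        IsTwoCover F U ∧ coverDiam U = nablaF F ∧ U.card = Tmin F :=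
      Nat.sInf_mem (⟨U0.card, hmem0⟩ :
        Set.Nonempty {t : ℕ | ∃ U : Finset (Finset Y),
          IsTwoCover F U ∧ coverDiam U = nablaF F ∧ U.card = t})
    obtain ⟨U, hU, hcd, hcard⟩ := hT
    have hsub : F ⊆ U.biUnion id := by
      intro a ha
      obtain ⟨V, hV, haV⟩ := hU.2.2 a ha
      exact Finset.mem_biUnion.mpr ⟨V, hV, haV⟩
    calc F.card ≤ (U.biUnion id).card := Finset.card_le_card hsub
      _ ≤ ∑ V ∈ U, (id V).card := Finset.card_biUnion_le
      _ ≤ ∑ _V ∈ U, B := by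
          apply Finset.sum_le_sum
          intro V hV
          apply hsmall V (hU.1 V hV)
          calc Metric.diam (V : Set Y) ≤ coverDiam U := diam_mem_le_coverDiam U hV
            _ = ε := by rw [hcd, hnabla]
      _ = U.card * B := by rw [Finset.sum_const, smul_eq_mul]
      _ = B * Tmin F := by rw [hcard, mul_comm]



lemma card_le_of_diam_le {n : ℕ} {ε : ℝ} (hε : 0 < ε) (V : Finset (EuclideanSpace ℝ (Fin n)))
    (hlat : ∀ p ∈ V, IsLatPt ε p)
    (hd : Metric.diam (V : Set (EuclideanSpace ℝ (Fin n))) ≤ ε) : V.card ≤ 3 ^ n := by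
  classical
  rcases V.eq_empty_or_nonempty with rfl | ⟨p0, hp0⟩
  · simp
  · set z : EuclideanSpace ℝ (Fin n) → (Fin n → ℤ) := fun q i =>
      if h : ∃ zz : ℤ, q i = ε * zz then h.choose else 0 with hz
    have hzq : ∀ q ∈ V, ∀ i, q i = ε * (z q i : ℝ) := by
      intro q hq i
      have h := hlat q hq i
      simp only [hz, dif_pos h]
      exact h.choose_spec
    have hmaps : ∀ q ∈ V, z q ∈ Fintype.piFinset
        fun i => ({z p0 i - 1, z p0 i, z p0 i + 1} : Finset ℤ) := by
      intro q hq
      simp only [Fintype.mem_piFinset, Finset.mem_insert, Finset.mem_singleton]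
      intro i
      have h1 : |q i - p0 i| ≤ ε := by
        have h2 : dist q p0 ≤ ε :=
          le_trans (Metric.dist_le_diam_of_mem V.finite_toSet.isBounded
            (Finset.mem_coe.mpr hq) (Finset.mem_coe.mpr hp0)) hd
        exact (coord_le_dist q p0 i).trans h2
      have heq : q i - p0 i = ε * ((z q i : ℝ) - (z p0 i : ℝ)) := by
        rw [hzq q hq i, hzq p0 hp0 i]; ring
      have h3 : ε * |(z q i : ℝ) - (z p0 i : ℝ)| ≤ ε := by
        calc ε * |(z q i : ℝ) - (z p0 i : ℝ)|
            = |ε| * |(z q i : ℝ) - (z p0 i : ℝ)| := by rw [abs_of_pos hε]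
          _ = |q i - p0 i| := by rw [← abs_mul, heq]
          _ ≤ ε := h1
      have h4 : |(z q i : ℝ) - (z p0 i : ℝ)| ≤ 1 := by
        nlinarith [abs_nonneg ((z q i : ℝ) - (z p0 i : ℝ))]
      have h5 : |z q i - z p0 i| ≤ (1 : ℤ) := by
        exact_mod_cast (by push_cast; exact h4 : |((z q i - z p0 i : ℤ) : ℝ)| ≤ 1)
      have := abs_le.mp h5
      omega
    calc V.card ≤ (Fintype.piFinset
        fun i => ({z p0 i - 1, z p0 i, z p0 i + 1} : Finset ℤ)).card :=
        Finset.card_le_card_of_injOn z hmaps (by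
          intro q hq q' hq' h
          ext i
          have h2 : ε * ((z q i : ℝ)) = ε * ((z q' i : ℝ)) := by rw [h]
          rw [hzq q hq i, hzq q' hq' i, h2])
      _ = ∏ i, ({z p0 i - 1, z p0 i, z p0 i + 1} : Finset ℤ).card := Fintype.card_piFinset _
      _ ≤ ∏ _i : Fin n, 3 := Finset.prod_le_prod' (fun i _ => by
          calc ({z p0 i - 1, z p0 i, z p0 i + 1} : Finset ℤ).card
              ≤ ({z p0 i, z p0 i + 1} : Finset ℤ).card + 1 := Finset.card_insert_le _ _
            _ ≤ (({z p0 i + 1} : Finset ℤ).card + 1) + 1 := by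
                have := Finset.card_insert_le (z p0 i) ({z p0 i + 1} : Finset ℤ)
                omega
            _ = 3 := by simp)
      _ = 3 ^ n := by simp


lemma dist_le_of_coord {n : ℕ} {x y : EuclideanSpace ℝ (Fin n)} {r : ℝ} (hr : 0 ≤ r)
    (h : ∀ i, |x i - y i| ≤ r) : dist x y ≤ Real.sqrt n * r := by
  rw [EuclideanSpace.dist_eq]
  have h1 : ∑ i, dist (x i) (y i) ^ 2 ≤ (n : ℝ) * r ^ 2 := by
    calc ∑ i, dist (x i) (y i) ^ 2 ≤ ∑ _i : Fin n, r ^ 2 := by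
          apply Finset.sum_le_sum
          intro i _
          rw [Real.dist_eq]
          exact pow_le_pow_left₀ (abs_nonneg _) (h i) 2
      _ = (n : ℝ) * r ^ 2 := by simp [Finset.sum_const, nsmul_eq_mul]
  calc Real.sqrt (∑ i, dist (x i) (y i) ^ 2) ≤ Real.sqrt ((n : ℝ) * r ^ 2) :=
        Real.sqrt_le_sqrt h1
    _ = Real.sqrt n * r := by
        rw [Real.sqrt_mul (Nat.cast_nonneg n), Real.sqrt_sq hr]

lemma lat_dist_ge {n : ℕ} {ε : ℝ} (hε : 0 < ε) {p q : EuclideanSpace ℝ (Fin n)}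
    (hp : IsLatPt ε p) (hq : IsLatPt ε q) (hne : p ≠ q) : ε ≤ dist p q := by
  have hex : ∃ i, p i ≠ q i := by
    by_contra h
    push_neg at h
    exact hne (PiLp.ext h)
  obtain ⟨i, hi⟩ := hex
  obtain ⟨a, ha⟩ := hp i
  obtain ⟨b, hb⟩ := hq i
  have hab : a ≠ b := by rintro rfl; exact hi (ha.trans hb.symm)
  have h1 : ε ≤ |p i - q i| := by
    rw [ha, hb, ← mul_sub, abs_mul, abs_of_pos hε]
    have h2 : (1 : ℝ) ≤ |(a : ℝ) - b| := by
      have h3 := Int.one_le_abs (sub_ne_zero.mpr hab)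
      calc (1:ℝ) ≤ ((|a - b| : ℤ) : ℝ) := by exact_mod_cast h3
        _ = |(a : ℝ) - b| := by push_cast; ring_nf
    nlinarith
  exact h1.trans (coord_le_dist p q i)

/-- Diameter comparison between `X` and its lattice approximation. -/
lemma diam_bounds {n : ℕ} {X : Set (EuclideanSpace ℝ (Fin n))} {ε : ℝ} (hε : 0 < ε)
    (hXb : Bornology.IsBounded X)
    (hlatb : Bornology.IsBounded (latticeApprox n X ε)) :
    Metric.diam (latticeApprox n X ε) ≤ Metric.diam X + 2 * (Real.sqrt n * ε) ∧
    Metric.diam X ≤ Metric.diam (latticeApprox n X ε) + 2 * (Real.sqrt n * ε) := by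
  have hsq : (0:ℝ) ≤ Real.sqrt n * ε := by positivity
  constructor
  · apply Metric.diam_le_of_forall_dist_le (by positivity)
    intro p hp q hq
    obtain ⟨x, hxX, hx⟩ := exists_close_X hp
    obtain ⟨y, hyX, hy⟩ := exists_close_X hq
    have h1 : dist p x ≤ Real.sqrt n * ε := dist_le_of_coord hε.le hx
    have h2 : dist q y ≤ Real.sqrt n * ε := dist_le_of_coord hε.le hy
    have h3 : dist x y ≤ Metric.diam X := Metric.dist_le_diam_of_mem hXb hxX hyX
    calc dist p q ≤ dist p x + dist x y + dist y q := dist_triangle4 p x y q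
      _ = dist p x + dist x y + dist q y := by rw [dist_comm y q]
      _ ≤ Real.sqrt n * ε + Metric.diam X + Real.sqrt n * ε := by linarith
      _ = Metric.diam X + 2 * (Real.sqrt n * ε) := by ring
  · apply Metric.diam_le_of_forall_dist_le (by positivity)
    intro x hx y hy
    obtain ⟨p, hpL, hp⟩ := exists_close_lattice hε hx
    obtain ⟨q, hqL, hq⟩ := exists_close_lattice hε hy
    have h1 : dist x p ≤ Real.sqrt n * ε := dist_le_of_coord hε.le hp
    have h2 : dist y q ≤ Real.sqrt n * ε := dist_le_of_coord hε.le hq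
    have h3 : dist p q ≤ Metric.diam (latticeApprox n X ε) :=
      Metric.dist_le_diam_of_mem hlatb hpL hqL
    calc dist x y ≤ dist x p + dist p q + dist q y := dist_triangle4 x p q y
      _ = dist x p + dist p q + dist y q := by rw [dist_comm q y]
      _ ≤ Real.sqrt n * ε + Metric.diam (latticeApprox n X ε) + Real.sqrt n * ε := by linarith
      _ = Metric.diam (latticeApprox n X ε) + 2 * (Real.sqrt n * ε) := by ring

end FinDimAux

open FinDim in
/-- Convergence theorem for the finite box dimension: if `X ⊆ ℝⁿ` is compact with
`∇(X) = 0 < Δ(X)` and the box-counting limit `L` exists, then the lattice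
approximations `F_k` (eventually without focal points) satisfy
`dim_fB(F_k) → L`. -/
theorem stmt18 (n : ℕ) (X : Set (EuclideanSpace ℝ (Fin n))) (hX : IsCompact X)
    (hnab : nablaSet X = 0) (hdiam : 0 < Metric.diam X)
    (c : ℝ) (hc : c ∈ Set.Ioo (0 : ℝ) 1)
    (N : ℕ → ℕ)
    (hN : ∀ k, N k = Set.ncard {m : Fin n → ℤ | (cube n (c ^ k) m ∩ X).Nonempty})
    (F : ℕ → Finset (EuclideanSpace ℝ (Fin n)))
    (hF : ∀ k, ((F k : Set (EuclideanSpace ℝ (Fin n)))) = latticeApprox n X (c ^ k))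
    (L : ℝ)
    (hL : Filter.Tendsto (fun k => Real.log (N k : ℝ) / (-Real.log (c ^ k)))
      Filter.atTop (nhds L)) :
    (∃ K : ℕ, ∀ k ≥ K, ∀ a, ¬ IsFocal (F k) a) ∧
    Filter.Tendsto (fun k => dimfB (F k)) Filter.atTop (nhds L) := by
  classical
  open FinDimAux in
  obtain ⟨hc0, hc1⟩ := hc
  -- basic positivity facts
  have hn : 0 < n := by
    rcases Nat.eq_zero_or_pos n with hn0 | h
    · exfalso
      subst hn0
      have hsub : X.Subsingleton := by
        intro x _ y _
        ext i
        exact i.elim0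
      rw [Metric.diam_subsingleton hsub] at hdiam
      exact lt_irrefl 0 hdiam
    · exact h
  have hXne : X.Nonempty := by
    rcases X.eq_empty_or_nonempty with rfl | h
    · simp [Metric.diam_empty] at hdiam
    · exact h
  have hXb := hX.isBounded
  have hε : ∀ k : ℕ, (0:ℝ) < c ^ k := fun k => pow_pos hc0 k
  -- membership transfer
  have hmemF : ∀ (k : ℕ) (p : EuclideanSpace ℝ (Fin n)),
      p ∈ F k ↔ p ∈ latticeApprox n X (c ^ k) := by
    intro k p
    rw [← hF k, Finset.mem_coe]
  have hlatfin : ∀ k, (latticeApprox n X (c ^ k)).Finite := by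
    intro k
    rw [← hF k]
    exact (F k).finite_toSet
  have hSfin : ∀ k, {m : Fin n → ℤ | (cube n (c ^ k) m ∩ X).Nonempty}.Finite :=
    fun k => S_finite hXb (hε k)
  -- separation and neighbours
  have hsep : ∀ k, ∀ p ∈ F k, ∀ q ∈ F k, p ≠ q → c ^ k ≤ dist p q := by
    intro k p hp q hq hne
    exact lat_dist_ge (hε k) (isLatPt_of_mem ((hmemF k p).mp hp))
      (isLatPt_of_mem ((hmemF k q).mp hq)) hne
  have hnb : ∀ k, ∀ p ∈ F k, ∃ q ∈ F k, q ≠ p ∧ dist p q = c ^ k := by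
    intro k p hp
    obtain ⟨q, hq, hq1, hq2⟩ := neighbor hn (hε k) ((hmemF k p).mp hp)
    exact ⟨q, (hmemF k q).mpr hq, hq1, hq2⟩
  have hFne : ∀ k, (F k).Nonempty := by
    intro k
    obtain ⟨x, hx⟩ := hXne
    obtain ⟨p, hp, -⟩ := exists_close_lattice (hε k) hx
    exact ⟨p, (hmemF k p).mpr hp⟩
  -- cardinality facts
  have hNpos : ∀ k, 0 < N k := by
    intro k
    rw [hN k]
    obtain ⟨x, hx⟩ := hXne
    refine (Set.ncard_pos (hSfin k)).mpr ?_
    exact ⟨fun i => ⌊x i / c ^ k⌋, x, mem_floor_cube (hε k) x, hx⟩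
  have hcard_lower : ∀ k, N k ≤ (F k).card := by
    intro k
    rw [hN k]
    have h1 := ncard_S_le_lattice (hε k) (hlatfin k)
    rwa [← hF k, Set.ncard_coe_finset] at h1
  have hcard_upper : ∀ k, (F k).card ≤ 2 ^ n * N k := by
    intro k
    obtain ⟨T, hT1, hT2⟩ := exists_superset_finset (hSfin k)
    have hsub : F k ⊆ T := by
      rw [← Finset.coe_subset, hF k]
      exact hT1
    calc (F k).card ≤ T.card := Finset.card_le_card hsub
      _ ≤ 2 ^ n * {m : Fin n → ℤ | (cube n (c ^ k) m ∩ X).Nonempty}.ncard := hT2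
      _ = 2 ^ n * N k := by rw [hN k]
  have hsmall : ∀ k, ∀ V : Finset (EuclideanSpace ℝ (Fin n)), V ⊆ F k →
      Metric.diam (V : Set (EuclideanSpace ℝ (Fin n))) ≤ c ^ k → V.card ≤ 3 ^ n := by
    intro k V hVF hVd
    exact card_le_of_diam_le (hε k) V
      (fun p hp => isLatPt_of_mem ((hmemF k p).mp (hVF hp))) hVd
  have htmin : ∀ k, Tmin (F k) ≤ (F k).card ∧ (F k).card ≤ 3 ^ n * Tmin (F k) :=
    fun k => tmin_facts (hε k) (hsep k) (hnb k) (hFne k) (hsmall k)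
  have hnabla : ∀ k, nablaF (F k) = c ^ k :=
    fun k => (nablaF_eq_of (hε k) (hsep k) (hnb k) (hFne k)).1
  -- diameter facts
  have hDb : ∀ k, Metric.diam ((F k : Set (EuclideanSpace ℝ (Fin n))))
        ≤ Metric.diam X + 2 * (Real.sqrt n * c ^ k) ∧
      Metric.diam X ≤ Metric.diam ((F k : Set (EuclideanSpace ℝ (Fin n))))
        + 2 * (Real.sqrt n * c ^ k) := by
    intro k
    have h := diam_bounds (hε k) hXb ((hlatfin k).isBounded)
    rwa [← hF k] at h
  have hsqnn : (0:ℝ) ≤ Real.sqrt n := Real.sqrt_nonneg n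
  -- smallness of ε eventually
  have hε0 : Filter.Tendsto (fun k : ℕ => c ^ k) Filter.atTop (nhds 0) :=
    tendsto_pow_atTop_nhds_zero_of_lt_one hc0.le hc1
  have hApos : (0:ℝ) < 2 * Real.sqrt n + 1 := by positivity
  have hevsmall : ∀ᶠ k in Filter.atTop,
      c ^ k * (2 * Real.sqrt n + 1) < Metric.diam X := by
    have h1 : ∀ᶠ k in Filter.atTop,
        c ^ k < Metric.diam X / (2 * Real.sqrt n + 1) :=
      hε0.eventually_lt_const (by positivity)
    filter_upwards [h1] with k hk
    exact (lt_div_iff₀ hApos).mp hk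
  have hDgt : ∀ k, c ^ k * (2 * Real.sqrt n + 1) < Metric.diam X →
      c ^ k < Metric.diam ((F k : Set (EuclideanSpace ℝ (Fin n)))) := by
    intro k hk
    have h2 := (hDb k).2
    nlinarith [hε k]
  -- Part 1 : no focal points
  have hfocal : ∀ k, c ^ k * (2 * Real.sqrt n + 1) < Metric.diam X →
      ∀ a, ¬ IsFocal (F k) a := by
    intro k hk a ⟨haF, hfoc⟩
    obtain ⟨q, hqF, hqne, hqd⟩ := hnb k a haF
    have h1 := hfoc q hqF hqne
    have h2 := hDgt k hk
    rw [← h1, hqd] at h2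
    exact lt_irrefl _ h2
  constructor
  · obtain ⟨K, hK⟩ := Filter.eventually_atTop.mp hevsmall
    exact ⟨K, fun k hk => hfocal k (hK k hk)⟩
  -- Part 2 : the limit
  · -- notation
    set g : ℕ → ℝ := fun k => -Real.log (c ^ k) with hgdef
    have hglog : ∀ k : ℕ, g k = (k : ℝ) * (-Real.log c) := by
      intro k
      rw [hgdef]
      simp only [Real.log_pow]
      ring
    have hlogc : 0 < -Real.log c := neg_pos.mpr (Real.log_neg hc0 hc1)
    have hgtop : Filter.Tendsto g Filter.atTop Filter.atTop := by
      rw [show g = fun k : ℕ => (k : ℝ) * (-Real.log c) from funext hglog]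
      exact Filter.Tendsto.atTop_mul_const hlogc tendsto_natCast_atTop_atTop
    have hgpos : ∀ k : ℕ, 1 ≤ k → 0 < g k := by
      intro k hk
      rw [hglog k]
      have : (1:ℝ) ≤ (k:ℝ) := by exact_mod_cast hk
      nlinarith
    have hTpos : ∀ k, 0 < Tmin (F k) := by
      intro k
      rcases Nat.eq_zero_or_pos (Tmin (F k)) with h | h
      · exfalso
        have h2 := (htmin k).2
        rw [h, Nat.mul_zero] at h2
        have h3 := hcard_lower k
        have h4 := hNpos k
        omega
      · exact h
    have hlog2 : (0:ℝ) ≤ Real.log 2 := Real.log_nonneg one_le_two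
    have hlog3 : (0:ℝ) ≤ Real.log 3 := Real.log_nonneg (by norm_num)
    set C : ℝ := (n : ℝ) * Real.log 3 + (n : ℝ) * Real.log 2 with hCdef
    have hlogTN : ∀ k, |Real.log (Tmin (F k)) - Real.log (N k)| ≤ C := by
      intro k
      have hT := hTpos k
      have hNp := hNpos k
      have h1 : (Tmin (F k) : ℝ) ≤ 2 ^ n * (N k : ℝ) := by
        have := (htmin k).1.trans (hcard_upper k)
        exact_mod_cast this
      have h2 : (N k : ℝ) ≤ 3 ^ n * (Tmin (F k) : ℝ) := by
        have := (hcard_lower k).trans (htmin k).2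
        exact_mod_cast this
      have hTr : (0:ℝ) < (Tmin (F k) : ℝ) := by exact_mod_cast hT
      have hNr : (0:ℝ) < (N k : ℝ) := by exact_mod_cast hNp
      have hup : Real.log (Tmin (F k)) ≤ (n : ℝ) * Real.log 2 + Real.log (N k) := by
        calc Real.log (Tmin (F k)) ≤ Real.log (2 ^ n * (N k : ℝ)) :=
              Real.log_le_log hTr h1
          _ = (n : ℝ) * Real.log 2 + Real.log (N k) := by
              rw [Real.log_mul (by positivity) hNr.ne', Real.log_pow]
      have hlo : Real.log (N k) ≤ (n : ℝ) * Real.log 3 + Real.log (Tmin (F k)) := by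
        calc Real.log (N k) ≤ Real.log (3 ^ n * (Tmin (F k) : ℝ)) :=
              Real.log_le_log hNr h2
          _ = (n : ℝ) * Real.log 3 + Real.log (Tmin (F k)) := by
              rw [Real.log_mul (by positivity) hTr.ne', Real.log_pow]
      rw [abs_le, hCdef]
      constructor
      · have hn2 : (0:ℝ) ≤ (n:ℝ) * Real.log 2 := by positivity
        linarith
      · have hn3 : (0:ℝ) ≤ (n:ℝ) * Real.log 3 := by positivity
        linarith
    -- convergence of the diameters
    set D : ℕ → ℝ := fun k => Metric.diam ((F k : Set (EuclideanSpace ℝ (Fin n))))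
      with hDdef
    have hDlim : Filter.Tendsto D Filter.atTop (nhds (Metric.diam X)) := by
      have hzero : Filter.Tendsto (fun k => D k - Metric.diam X)
          Filter.atTop (nhds 0) := by
        apply squeeze_zero_norm (a := fun k => 2 * Real.sqrt n * c ^ k)
        · intro k
          rw [Real.norm_eq_abs, abs_le]
          constructor
          · have := (hDb k).2
            nlinarith
          · have := (hDb k).1
            nlinarith
        · have := hε0.const_mul (2 * Real.sqrt n)
          simpa using this
      have := hzero.add_const (Metric.diam X)
      simpa using this
    have hlogD : Filter.Tendsto (fun k => Real.log (D k)) Filter.atTop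
        (nhds (Real.log (Metric.diam X))) :=
      (Real.continuousAt_log hdiam.ne').tendsto.comp hDlim
    -- the three convergence components
    have h1 : Filter.Tendsto (fun k => Real.log (N k) / g k) Filter.atTop (nhds L) := hL
    have h2 : Filter.Tendsto
        (fun k => (Real.log (Tmin (F k)) - Real.log (N k)) / g k)
        Filter.atTop (nhds 0) := by
      apply squeeze_zero_norm' (a := fun k => C / g k)
      · filter_upwards [Filter.eventually_ge_atTop 1] with k hk
        have hg := hgpos k hk
        rw [Real.norm_eq_abs, abs_div, abs_of_pos hg]
        gcongr
        exact hlogTN k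
      · exact Filter.Tendsto.div_atTop tendsto_const_nhds hgtop
    have h3 : Filter.Tendsto (fun k => g k / (Real.log (D k) + g k))
        Filter.atTop (nhds 1) := by
      have ha : Filter.Tendsto (fun k => Real.log (D k) / g k) Filter.atTop (nhds 0) :=
        Filter.Tendsto.div_atTop hlogD hgtop
      have hb : Filter.Tendsto (fun k => (Real.log (D k) + g k) / g k)
          Filter.atTop (nhds 1) := by
        apply Filter.Tendsto.congr' (f₁ := fun k => Real.log (D k) / g k + 1)
        · filter_upwards [Filter.eventually_ge_atTop 1] with k hk
          have hg := (hgpos k hk).ne'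
          field_simp
        · have := ha.add (tendsto_const_nhds (x := (1:ℝ)))
          simpa using this
      have hc' : Filter.Tendsto (fun k => ((Real.log (D k) + g k) / g k)⁻¹)
          Filter.atTop (nhds 1) := by
        have := hb.inv₀ one_ne_zero
        simpa using this
      apply hc'.congr
      intro k
      rw [inv_div]
    have hfinal : Filter.Tendsto
        (fun k => (Real.log (N k) / g k +
            (Real.log (Tmin (F k)) - Real.log (N k)) / g k) *
          (g k / (Real.log (D k) + g k)))
        Filter.atTop (nhds L) := by
      have := (h1.add h2).mul h3
      simpa using this
    apply hfinal.congr'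
    filter_upwards [hevsmall, Filter.eventually_ge_atTop 1] with k hks hk1
    have hgne : g k ≠ 0 := (hgpos k hk1).ne'
    have hDpos : 0 < D k := (hε k).trans (hDgt k hks)
    have hlogdiv : Real.log (Metric.diam ((F k : Set (EuclideanSpace ℝ (Fin n)))) / c ^ k)
        = Real.log (D k) + g k := by
      have hdd : Metric.diam ((F k : Set (EuclideanSpace ℝ (Fin n)))) = D k := rfl
      rw [hdd, Real.log_div hDpos.ne' (hε k).ne', hgdef]
      ring
    have halg : (Real.log (N k) / g k +
          (Real.log (Tmin (F k)) - Real.log (N k)) / g k) *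
        (g k / (Real.log (D k) + g k)) =
        Real.log (Tmin (F k)) / (Real.log (D k) + g k) := by
      rw [← add_div]
      have hs : Real.log (N k) + (Real.log (Tmin (F k)) - Real.log (N k)) =
          Real.log (Tmin (F k)) := by ring
      rw [hs, div_mul_div_comm, mul_comm (Real.log (Tmin (F k))) (g k),
        mul_div_mul_left _ _ hgne]
    rw [halg, dimfB, hnabla k, hlogdiv]
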